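/- Let m, n be nonzero integers and let Γ = BS(m, n) with stable letter τ; let H denote the image in Γ of the subgroup ⟨b^m⟩, and set K₊ = ⋂_{p≥0} τ^{−p} H τ^{p} and K₋ = ⋂_{p≥0} τ^{p} H τ^{−p}, subgroups of Γ. Then: (a) if |m| = |n|, then K₊ = K₋ = H; (b) if n = ±am for some integer a ≥ 2, then K₊ = {1} and K₋ = H; (c) if m = ±an for some integer a ≥ 2, then K₊ = H and K₋ = {1}; (d) in all other cases, K₊ = K₋ = {1}. -/

import Mathlib

open Filter Set

section PowersDefs

def IsPowersGroup (Γ : Type*) [Group Γ] : Prop :=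
  Nontrivial Γ ∧
    ∀ F : Finset Γ, (1 : Γ) ∉ F → ∀ N : ℕ, 1 ≤ N →
      ∃ (C : Set Γ) (g : Fin N → Γ),
        (∀ f ∈ F, (fun x => f * x) '' C ∩ C = ∅) ∧
        ∀ j k : Fin N, j ≠ k →
          (fun x => g j * x) '' Cᶜ ∩ (fun x => g k * x) '' Cᶜ = ∅

def IsSubnormalIn {Γ : Type*} [Group Γ] (N : Subgroup Γ) : Prop :=
  ∃ (k : ℕ) (c : ℕ → Subgroup Γ), c 0 = N ∧ c k = ⊤ ∧
    ∀ i < k, c i ≤ c (i + 1) ∧ ∀ x ∈ c (i + 1), ∀ y ∈ c i, x * y * x⁻¹ ∈ c i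

def IsStronglyPowersGroup (Γ : Type*) [Group Γ] : Prop :=
  ∀ N : Subgroup Γ, IsSubnormalIn N → N ≠ ⊥ → IsPowersGroup N

end PowersDefs

section BSDefs

/-- The single relation `τ⁻¹ b^m τ b^{-n}` of the Baumslag–Solitar group, in the free group
on two generators (`true ↦ τ`, `false ↦ b`). -/
def BSRels (m n : ℤ) : Set (FreeGroup Bool) :=
  {(FreeGroup.of true)⁻¹ * (FreeGroup.of false) ^ m * FreeGroup.of true *
    ((FreeGroup.of false) ^ n)⁻¹}

/-- The Baumslag–Solitar group `BS(m, n) = ⟨τ, b | τ⁻¹ b^m τ = b^n⟩`. -/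
def BS (m n : ℤ) : Type :=
  PresentedGroup (BSRels m n)

instance (m n : ℤ) : Group (BS m n) := by
  delta BS; infer_instance

/-- The generator `τ` of `BS(m, n)` (the stable letter). -/
def BS.τ (m n : ℤ) : BS m n := PresentedGroup.of true

/-- The generator `b` of `BS(m, n)`. -/
def BS.b (m n : ℤ) : BS m n := PresentedGroup.of false

end BSDefs

/-! ### Auxiliary material -/


section Aux

/-- The defining relation of `BS(m,n)`. -/
lemma bs_rel (m n : ℤ) : (BS.τ m n)⁻¹ * (BS.b m n) ^ m * BS.τ m n = (BS.b m n) ^ n := by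
  have h1 : (PresentedGroup.mk (BSRels m n))
      ((FreeGroup.of true)⁻¹ * (FreeGroup.of false) ^ m * FreeGroup.of true *
        ((FreeGroup.of false) ^ n)⁻¹) = 1 :=
    (QuotientGroup.eq_one_iff _).2 (Subgroup.subset_normalClosure rfl)
  rw [map_mul, map_mul, map_mul, map_inv, map_inv, map_zpow, map_zpow] at h1
  exact mul_inv_eq_one.mp h1

/-- Translations as a hom from `Multiplicative ℚ` to permutations of `ℚ`. -/
noncomputable def Tr : Multiplicative ℚ →* Equiv.Perm ℚ where
  toFun a := Equiv.addRight a.toAdd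
  map_one' := by ext x; simp
  map_mul' a b := by ext x; simp [Equiv.Perm.mul_apply]; ring

@[simp] lemma Tr_apply (a : Multiplicative ℚ) (x : ℚ) : Tr a x = x + a.toAdd := rfl

/-- Scalings as a hom from `ℚˣ` to permutations of `ℚ`. -/
def Sc : ℚˣ →* Equiv.Perm ℚ := MulAction.toPermHom ℚˣ ℚ

@[simp] lemma Sc_apply (u : ℚˣ) (x : ℚ) : Sc u x = (u : ℚ) * x := rfl

variable (m n : ℤ)

/-- The ratio `m / n` as a unit of `ℚ`. -/
noncomputable def cu (hm : m ≠ 0) (hn : n ≠ 0) : ℚˣ :=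
  Units.mk0 ((m : ℚ) / n) (div_ne_zero (Int.cast_ne_zero.2 hm) (Int.cast_ne_zero.2 hn))

/-- The affine representation of `BS(m,n)` on `ℚ`: `b` acts by `x ↦ x + 1` and `τ` acts by
`x ↦ (m/n) * x`. -/
noncomputable def φ (hm : m ≠ 0) (hn : n ≠ 0) : BS m n →* Equiv.Perm ℚ :=
  PresentedGroup.toGroup
    (f := fun t => if t then Sc (cu m n hm hn) else Tr (Multiplicative.ofAdd 1))
    (by
      have hm' : (m : ℚ) ≠ 0 := Int.cast_ne_zero.2 hm
      have hn' : (n : ℚ) ≠ 0 := Int.cast_ne_zero.2 hn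
      rintro r rfl
      rw [map_mul, map_mul, map_mul, map_inv, map_inv, map_zpow, map_zpow]
      simp only [FreeGroup.lift_apply_of, if_true, if_false, Bool.false_eq_true]
      rw [← map_zpow Tr, ← map_zpow Tr, ← map_inv Tr, ← map_inv Sc]
      ext x
      simp only [Equiv.Perm.mul_apply, Tr_apply, Sc_apply, toAdd_zpow, toAdd_inv, toAdd_ofAdd,
        smul_eq_mul, zsmul_eq_mul, mul_one, cu, Units.val_inv_eq_inv_val, Units.val_mk0,
        Equiv.Perm.one_apply]
      field_simp
      ring)

lemma φ_b (hm : m ≠ 0) (hn : n ≠ 0) (k : ℤ) (x : ℚ) :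
    φ m n hm hn ((BS.b m n) ^ k) x = x + k := by
  rw [map_zpow]
  have h : φ m n hm hn (BS.b m n) = Tr (Multiplicative.ofAdd 1) := by
    exact PresentedGroup.toGroup.of (x := false) _
  rw [h, ← map_zpow Tr, Tr_apply, toAdd_zpow]
  norm_num

lemma φ_τ (hm : m ≠ 0) (hn : n ≠ 0) (t : ℤ) (x : ℚ) :
    φ m n hm hn ((BS.τ m n) ^ t) x = ((m : ℚ) / n) ^ t * x := by
  rw [map_zpow]
  have h : φ m n hm hn (BS.τ m n) = Sc (cu m n hm hn) := by
    exact PresentedGroup.toGroup.of (x := true) _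
  rw [h, ← map_zpow Sc, Sc_apply, Units.val_zpow_eq_zpow_val]
  rfl

/-- Key consequence of the representation: an equation
`(b^m)^k = τ^t (b^m)^s τ^{-t}` forces a numerical identity. -/
lemma key_q (hm : m ≠ 0) (hn : n ≠ 0) (t k s : ℤ)
    (h : ((BS.b m n) ^ m) ^ k = (BS.τ m n) ^ t * ((BS.b m n) ^ m) ^ s * (BS.τ m n) ^ (-t)) :
    (m : ℚ) * k = ((m : ℚ) / n) ^ t * ((m : ℚ) * s) := by
  have h0 := congrArg (fun gg => φ m n hm hn gg 0) h
  simp only [← zpow_mul, map_mul, Equiv.Perm.mul_apply, φ_b, φ_τ] at h0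
  push_cast at h0
  linear_combination h0

lemma NT (m n k : ℤ) (hm : m ≠ 0) (hn : n ≠ 0) (hnd : ¬ n ∣ m)
    (h : ∀ p : ℕ, ∃ s : ℤ, k * m ^ p = s * n ^ p) : k = 0 := by
  by_contra hk
  have hg0 : m.gcd n ≠ 0 := fun h0 => hm (Int.gcd_eq_zero_iff.1 h0).1
  obtain ⟨g, hgdef⟩ : ∃ g : ℤ, g = (m.gcd n : ℤ) := ⟨_, rfl⟩
  have hd : g ≠ 0 := by rw [hgdef]; exact_mod_cast hg0
  obtain ⟨m', hmm⟩ : g ∣ m := hgdef ▸ Int.gcd_dvd_left m n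
  obtain ⟨n', hnn⟩ : g ∣ n := hgdef ▸ Int.gcd_dvd_right m n
  have hm'eq : m' = m / g := by rw [hmm, Int.mul_ediv_cancel_left _ hd]
  have hn'eq : n' = n / g := by rw [hnn, Int.mul_ediv_cancel_left _ hd]
  have hcop : IsCoprime m' n' := by
    rw [Int.isCoprime_iff_gcd_eq_one, hm'eq, hn'eq, hgdef]
    exact Int.gcd_div_gcd_div_gcd (Nat.pos_of_ne_zero hg0)
  have hn'0 : n' ≠ 0 := by rintro rfl; rw [mul_zero] at hnn; exact hn hnn
  have hn'1 : ¬ (n' = 1 ∨ n' = -1) := by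
    rintro (rfl | rfl)
    · refine hnd ?_; rw [hmm, hnn]; exact mul_dvd_mul_left _ (one_dvd _)
    · refine hnd ?_; rw [hmm, hnn]; exact mul_dvd_mul_left _ ⟨-m', by ring⟩
  have hn2 : 2 ≤ |n'| := by rcases abs_cases n' with ⟨h1, h2⟩ | ⟨h1, h2⟩ <;> omega
  obtain ⟨p, hp⟩ : ∃ p : ℕ, |k| < 2 ^ p := by
    refine ⟨k.natAbs, ?_⟩
    have h4 : k.natAbs < 2 ^ k.natAbs := Nat.lt_two_pow_self
    calc |k| = (k.natAbs : ℤ) := Int.abs_eq_natAbs k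
      _ < ((2 ^ k.natAbs : ℕ) : ℤ) := by exact_mod_cast h4
      _ = 2 ^ k.natAbs := by push_cast; ring
  obtain ⟨s, hs⟩ := h p
  have hred : k * m' ^ p = s * n' ^ p := by
    apply mul_left_cancel₀ (pow_ne_zero p hd)
    have h5 : k * (g * m') ^ p = s * (g * n') ^ p := by rw [← hmm, ← hnn]; exact hs
    rw [mul_pow, mul_pow] at h5
    linear_combination h5
  have hdvd : n' ^ p ∣ k := by
    have hcp : IsCoprime (n' ^ p) (m' ^ p) := IsCoprime.pow hcop.symm
    refine hcp.dvd_of_dvd_mul_right ⟨s, ?_⟩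
    linear_combination hred
  have h1 : |n'| ^ p ∣ |k| := by rw [← abs_pow]; exact (abs_dvd_abs _ _).mpr hdvd
  have h2 : |n'| ^ p ≤ |k| := Int.le_of_dvd (abs_pos.2 hk) h1
  have h3 : (2 : ℤ) ^ p ≤ |n'| ^ p := pow_le_pow_left₀ (by norm_num) hn2 p
  linarith

/-- Rational arithmetic helper for `K₊`. -/
lemma ratP (mq nq kq sq : ℚ) (p : ℕ) (hm : mq ≠ 0) (hn : nq ≠ 0)
    (hq : mq * kq = (mq / nq) ^ (-(p : ℤ)) * (mq * sq)) : kq * mq ^ p = sq * nq ^ p := by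
  have hc : (mq / nq) ^ p ≠ 0 := pow_ne_zero _ (div_ne_zero hm hn)
  have h2 : (mq / nq) ^ p * (mq * kq) = mq * sq := by
    rw [hq, zpow_neg, zpow_natCast, ← mul_assoc, mul_inv_cancel₀ hc, one_mul]
  rw [div_pow] at h2
  field_simp at h2
  apply mul_left_cancel₀ hm
  linear_combination mq * h2

/-- Rational arithmetic helper for `K₋`. -/
lemma ratM (mq nq kq sq : ℚ) (p : ℕ) (hm : mq ≠ 0) (hn : nq ≠ 0)
    (hq : mq * kq = (mq / nq) ^ ((p : ℤ)) * (mq * sq)) : kq * nq ^ p = sq * mq ^ p := by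
  have h2 : mq * kq * nq ^ p = mq * sq * mq ^ p := by
    rw [hq, zpow_natCast, div_pow]
    field_simp
  apply mul_left_cancel₀ hm
  linear_combination h2

/-- Composition of conjugation homs. -/
lemma conj_comp {G : Type*} [Group G] (a b : G) :
    (MulAut.conj a).toMonoidHom.comp (MulAut.conj b).toMonoidHom
      = (MulAut.conj (a * b)).toMonoidHom := by
  ext x
  simp [MulAut.conj_apply, mul_assoc]

lemma map_conj_one {G : Type*} [Group G] (H : Subgroup G) :
    H.map (MulAut.conj (1 : G)).toMonoidHom = H := by
  ext x
  simp [Subgroup.mem_map]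

/-- The image of `H = ⟨b^m⟩` under conjugation by `τ⁻¹` is `⟨b^n⟩`. -/
lemma conj_inv_H :
    (Subgroup.zpowers ((BS.b m n) ^ m)).map (MulAut.conj ((BS.τ m n)⁻¹)).toMonoidHom
      = Subgroup.zpowers ((BS.b m n) ^ n) := by
  rw [MonoidHom.map_zpowers]
  congr 1
  simp only [MulEquiv.coe_toMonoidHom, MulAut.conj_apply, inv_inv]
  exact bs_rel m n

end Aux

section Master

variable (m n : ℤ)

/-- If `n ∣ m` then the chain `p ↦ τ^{-p} H τ^{p}` is increasing from `H`. -/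
lemma Kplus_eq_H (hdvd : n ∣ m) :
    (⨅ p : ℕ, (Subgroup.zpowers ((BS.b m n) ^ m)).map
        (MulAut.conj ((BS.τ m n) ^ (-(p : ℤ)))).toMonoidHom)
      = Subgroup.zpowers ((BS.b m n) ^ m) := by
  have hbase : Subgroup.zpowers ((BS.b m n) ^ m)
      ≤ (Subgroup.zpowers ((BS.b m n) ^ m)).map (MulAut.conj ((BS.τ m n)⁻¹)).toMonoidHom := by
    rw [conj_inv_H, Subgroup.zpowers_le]
    obtain ⟨c, hc⟩ := hdvd
    exact Subgroup.mem_zpowers_iff.2 ⟨c, by rw [← zpow_mul, ← hc]⟩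
  have hstep : ∀ p : ℕ, Subgroup.zpowers ((BS.b m n) ^ m)
      ≤ (Subgroup.zpowers ((BS.b m n) ^ m)).map
          (MulAut.conj ((BS.τ m n) ^ (-(p : ℤ)))).toMonoidHom := by
    intro p
    induction p with
    | zero =>
      norm_num [map_conj_one]
    | succ p ih =>
      have he : (MulAut.conj ((BS.τ m n) ^ (-((p + 1 : ℕ) : ℤ)))).toMonoidHom
          = ((MulAut.conj ((BS.τ m n) ^ (-(p : ℤ)))).toMonoidHom).comp
              ((MulAut.conj ((BS.τ m n)⁻¹)).toMonoidHom) := by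
        rw [conj_comp]
        congr 2
        rw [← zpow_neg_one, ← zpow_add]
        congr 1
        push_cast
        ring
      rw [he, ← Subgroup.map_map]
      exact ih.trans (Subgroup.map_mono hbase)
  refine le_antisymm ((iInf_le _ 0).trans ?_) (le_iInf hstep)
  norm_num [map_conj_one]

/-- If `m ∣ n` then the chain `p ↦ τ^{p} H τ^{-p}` is increasing from `H`. -/
lemma Kminus_eq_H (hdvd : m ∣ n) :
    (⨅ p : ℕ, (Subgroup.zpowers ((BS.b m n) ^ m)).map
        (MulAut.conj ((BS.τ m n) ^ ((p : ℤ)))).toMonoidHom)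
      = Subgroup.zpowers ((BS.b m n) ^ m) := by
  have hsmall : (Subgroup.zpowers ((BS.b m n) ^ m)).map
        (MulAut.conj ((BS.τ m n)⁻¹)).toMonoidHom
      ≤ Subgroup.zpowers ((BS.b m n) ^ m) := by
    rw [conj_inv_H, Subgroup.zpowers_le]
    obtain ⟨c, hc⟩ := hdvd
    exact Subgroup.mem_zpowers_iff.2 ⟨c, by rw [← zpow_mul, ← hc]⟩
  have hbase : Subgroup.zpowers ((BS.b m n) ^ m)
      ≤ (Subgroup.zpowers ((BS.b m n) ^ m)).map (MulAut.conj (BS.τ m n)).toMonoidHom := by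
    have hid : ((Subgroup.zpowers ((BS.b m n) ^ m)).map
          (MulAut.conj ((BS.τ m n)⁻¹)).toMonoidHom).map (MulAut.conj (BS.τ m n)).toMonoidHom
        = Subgroup.zpowers ((BS.b m n) ^ m) := by
      rw [Subgroup.map_map, conj_comp, mul_inv_cancel, map_conj_one]
    calc Subgroup.zpowers ((BS.b m n) ^ m)
        = _ := hid.symm
      _ ≤ (Subgroup.zpowers ((BS.b m n) ^ m)).map (MulAut.conj (BS.τ m n)).toMonoidHom :=
        Subgroup.map_mono hsmall
  have hstep : ∀ p : ℕ, Subgroup.zpowers ((BS.b m n) ^ m)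
      ≤ (Subgroup.zpowers ((BS.b m n) ^ m)).map
          (MulAut.conj ((BS.τ m n) ^ ((p : ℤ)))).toMonoidHom := by
    intro p
    induction p with
    | zero =>
      norm_num [map_conj_one]
    | succ p ih =>
      have he : (MulAut.conj ((BS.τ m n) ^ (((p + 1 : ℕ) : ℤ)))).toMonoidHom
          = ((MulAut.conj ((BS.τ m n) ^ ((p : ℤ)))).toMonoidHom).comp
              ((MulAut.conj (BS.τ m n)).toMonoidHom) := by
        have hbq : (BS.τ m n) ^ (((p + 1 : ℕ)) : ℤ) = (BS.τ m n) ^ ((p : ℤ)) * BS.τ m n := by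
          rw [show (((p + 1 : ℕ)) : ℤ) = (p : ℤ) + 1 by push_cast; ring, zpow_add_one]
        rw [conj_comp, hbq]
      rw [he, ← Subgroup.map_map]
      exact ih.trans (Subgroup.map_mono hbase)
  refine le_antisymm ((iInf_le _ 0).trans ?_) (le_iInf hstep)
  norm_num [map_conj_one]

lemma Kplus_eq_bot (hm : m ≠ 0) (hn : n ≠ 0) (hnd : ¬ n ∣ m) :
    (⨅ p : ℕ, (Subgroup.zpowers ((BS.b m n) ^ m)).map
        (MulAut.conj ((BS.τ m n) ^ (-(p : ℤ)))).toMonoidHom) = ⊥ := by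
  rw [eq_bot_iff]
  intro x hx
  rw [Subgroup.mem_iInf] at hx
  have h0 := hx 0
  norm_num [map_conj_one] at h0
  obtain ⟨k, hk⟩ := Subgroup.mem_zpowers_iff.1 h0
  have hker : ∀ p : ℕ, ∃ s : ℤ, k * m ^ p = s * n ^ p := by
    intro p
    obtain ⟨y, hy, hxy⟩ := Subgroup.mem_map.1 (hx p)
    obtain ⟨s, hsy⟩ := Subgroup.mem_zpowers_iff.1 hy
    simp only [MulEquiv.coe_toMonoidHom, MulAut.conj_apply] at hxy
    refine ⟨s, ?_⟩
    have heq : ((BS.b m n) ^ m) ^ k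
        = (BS.τ m n) ^ (-(p : ℤ)) * ((BS.b m n) ^ m) ^ s * (BS.τ m n) ^ (-(-(p : ℤ))) := by
      rw [zpow_neg (BS.τ m n) (-(p : ℤ)), hsy, hxy, hk]
    have hq := key_q m n hm hn (-(p : ℤ)) k s heq
    have := ratP (m : ℚ) (n : ℚ) (k : ℚ) (s : ℚ) p
      (Int.cast_ne_zero.2 hm) (Int.cast_ne_zero.2 hn) hq
    exact_mod_cast this
  have hk0 := NT m n k hm hn hnd hker
  rw [Subgroup.mem_bot, ← hk, hk0, zpow_zero]

lemma Kminus_eq_bot (hm : m ≠ 0) (hn : n ≠ 0) (hnd : ¬ m ∣ n) :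
    (⨅ p : ℕ, (Subgroup.zpowers ((BS.b m n) ^ m)).map
        (MulAut.conj ((BS.τ m n) ^ ((p : ℤ)))).toMonoidHom) = ⊥ := by
  rw [eq_bot_iff]
  intro x hx
  rw [Subgroup.mem_iInf] at hx
  have h0 := hx 0
  norm_num [map_conj_one] at h0
  obtain ⟨k, hk⟩ := Subgroup.mem_zpowers_iff.1 h0
  have hker : ∀ p : ℕ, ∃ s : ℤ, k * n ^ p = s * m ^ p := by
    intro p
    obtain ⟨y, hy, hxy⟩ := Subgroup.mem_map.1 (hx p)
    obtain ⟨s, hsy⟩ := Subgroup.mem_zpowers_iff.1 hy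
    simp only [MulEquiv.coe_toMonoidHom, MulAut.conj_apply] at hxy
    refine ⟨s, ?_⟩
    have heq : ((BS.b m n) ^ m) ^ k
        = (BS.τ m n) ^ ((p : ℤ)) * ((BS.b m n) ^ m) ^ s * (BS.τ m n) ^ (-(p : ℤ)) := by
      rw [zpow_neg (BS.τ m n) ((p : ℤ)), hsy, hxy, hk]
    have hq := key_q m n hm hn ((p : ℤ)) k s heq
    have := ratM (m : ℚ) (n : ℚ) (k : ℚ) (s : ℚ) p
      (Int.cast_ne_zero.2 hm) (Int.cast_ne_zero.2 hn) hq
    exact_mod_cast this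
  have hk0 := NT n m k hn hm hnd hker
  rw [Subgroup.mem_bot, ← hk, hk0, zpow_zero]

end Master

theorem statement15 (m n : ℤ) (hm : m ≠ 0) (hn : n ≠ 0) :
    (let H : Subgroup (BS m n) := Subgroup.zpowers ((BS.b m n) ^ m)
     let Kplus : Subgroup (BS m n) :=
       ⨅ p : ℕ, H.map (MulAut.conj ((BS.τ m n) ^ (-(p : ℤ)))).toMonoidHom
     let Kminus : Subgroup (BS m n) :=
       ⨅ p : ℕ, H.map (MulAut.conj ((BS.τ m n) ^ (p : ℤ))).toMonoidHom
     (m.natAbs = n.natAbs → Kplus = H ∧ Kminus = H) ∧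
     ((∃ a : ℤ, 2 ≤ a ∧ (n = a * m ∨ n = -(a * m))) → Kplus = ⊥ ∧ Kminus = H) ∧
     ((∃ a : ℤ, 2 ≤ a ∧ (m = a * n ∨ m = -(a * n))) → Kplus = H ∧ Kminus = ⊥) ∧
     (¬ m.natAbs = n.natAbs →
      ¬ (∃ a : ℤ, 2 ≤ a ∧ (n = a * m ∨ n = -(a * m))) →
      ¬ (∃ a : ℤ, 2 ≤ a ∧ (m = a * n ∨ m = -(a * n))) →
      Kplus = ⊥ ∧ Kminus = ⊥)) := by
  intro H Kplus Kminus
  have habs : m.natAbs = n.natAbs → n ∣ m ∧ m ∣ n := by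
    intro hab
    rcases Int.natAbs_eq_natAbs_iff.1 hab with h | h
    · exact ⟨⟨1, by omega⟩, ⟨1, by omega⟩⟩
    · exact ⟨⟨-1, by omega⟩, ⟨-1, by omega⟩⟩
  have hcaseb : ∀ a : ℤ, 2 ≤ a → (n = a * m ∨ n = -(a * m)) → m ∣ n ∧ ¬ n ∣ m := by
    intro a ha h
    have h1 : n.natAbs = a.natAbs * m.natAbs := by
      rcases h with h | h <;> rw [h] <;> simp [Int.natAbs_mul]
    have hlt : m.natAbs < n.natAbs := by
      have h2 : 2 ≤ a.natAbs := by omega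
      have h3 : 1 ≤ m.natAbs := by omega
      calc m.natAbs < 2 * m.natAbs := by omega
        _ ≤ a.natAbs * m.natAbs := Nat.mul_le_mul_right _ h2
        _ = n.natAbs := h1.symm
    constructor
    · rcases h with h | h
      · exact ⟨a, by rw [h]; ring⟩
      · exact ⟨-a, by rw [h]; ring⟩
    · intro hdvd
      have h4 := Int.natAbs_dvd_natAbs.2 hdvd
      have h5 := Nat.le_of_dvd (by omega) h4
      omega
  have hcasec : ∀ a : ℤ, 2 ≤ a → (m = a * n ∨ m = -(a * n)) → n ∣ m ∧ ¬ m ∣ n := by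
    intro a ha h
    have h1 : m.natAbs = a.natAbs * n.natAbs := by
      rcases h with h | h <;> rw [h] <;> simp [Int.natAbs_mul]
    have hlt : n.natAbs < m.natAbs := by
      have h2 : 2 ≤ a.natAbs := by omega
      have h3 : 1 ≤ n.natAbs := by omega
      calc n.natAbs < 2 * n.natAbs := by omega
        _ ≤ a.natAbs * n.natAbs := Nat.mul_le_mul_right _ h2
        _ = m.natAbs := h1.symm
    constructor
    · rcases h with h | h
      · exact ⟨a, by rw [h]; ring⟩
      · exact ⟨-a, by rw [h]; ring⟩
    · intro hdvd
      have h4 := Int.natAbs_dvd_natAbs.2 hdvd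
      have h5 := Nat.le_of_dvd (by omega) h4
      omega
  have hcased : ¬ m.natAbs = n.natAbs →
      ¬ (∃ a : ℤ, 2 ≤ a ∧ (n = a * m ∨ n = -(a * m))) →
      ¬ (∃ a : ℤ, 2 ≤ a ∧ (m = a * n ∨ m = -(a * n))) → ¬ n ∣ m ∧ ¬ m ∣ n := by
    intro h1 h2 h3
    constructor
    · rintro ⟨c, hc⟩
      have hc0 : c ≠ 0 := by rintro rfl; rw [mul_zero] at hc; exact hm hc
      rcases (by omega : c ≤ -2 ∨ c = -1 ∨ c = 1 ∨ 2 ≤ c) with h4 | h4 | h4 | h4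
      · exact h3 ⟨-c, by omega, Or.inr (by rw [hc]; ring)⟩
      · subst h4; exact h1 (by omega)
      · subst h4; exact h1 (by omega)
      · exact h3 ⟨c, h4, Or.inl (by rw [hc]; ring)⟩
    · rintro ⟨c, hc⟩
      have hc0 : c ≠ 0 := by rintro rfl; rw [mul_zero] at hc; exact hn hc
      rcases (by omega : c ≤ -2 ∨ c = -1 ∨ c = 1 ∨ 2 ≤ c) with h4 | h4 | h4 | h4
      · exact h2 ⟨-c, by omega, Or.inr (by rw [hc]; ring)⟩
      · subst h4; exact h1 (by omega)
      · subst h4; exact h1 (by omega)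
      · exact h2 ⟨c, h4, Or.inl (by rw [hc]; ring)⟩
  refine ⟨?_, ?_, ?_, ?_⟩
  · intro hab
    obtain ⟨h1, h2⟩ := habs hab
    exact ⟨Kplus_eq_H m n h1, Kminus_eq_H m n h2⟩
  · rintro ⟨a, ha, h⟩
    obtain ⟨h1, h2⟩ := hcaseb a ha h
    exact ⟨Kplus_eq_bot m n hm hn h2, Kminus_eq_H m n h1⟩
  · rintro ⟨a, ha, h⟩
    obtain ⟨h1, h2⟩ := hcasec a ha h
    exact ⟨Kplus_eq_H m n h1, Kminus_eq_bot m n hm hn h2⟩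
  · intro h1 h2 h3
    obtain ⟨h4, h5⟩ := hcased h1 h2 h3
    exact ⟨Kplus_eq_bot m n hm hn h4, Kminus_eq_bot m n hm hn h5⟩
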